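/- There is a bijection between the set 𝔅_σ of bridges of length σ and the set of sequences in {−1,+1}^{2σ} containing exactly σ entries equal to −1, obtained by mapping a bridge b to the sequence consisting of (b(0)−b(σ)) entries +1, then −1, then (b(1)−b(0)+1) entries +1, then −1, ..., ending with (b(σ)−b(σ−1)+1) entries +1. -/

import Mathlib

/-- A (discrete) bridge of length `σ`, encoded as a list of `σ+1` integer values:
`b 0 = 0`, each increment lies in `ℕ₀ ∪ {-1}` (i.e. is `≥ -1`), and the final value is `≤ 0`. -/
def IsBridge (σ : ℕ) (b : List ℤ) : Prop :=
  b.length = σ + 1 ∧ b.getD 0 0 = 0 ∧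
    (∀ i < σ, -1 ≤ b.getD (i + 1) 0 - b.getD i 0) ∧ b.getD σ 0 ≤ 0

/-- The map sending a bridge `b` to the `±1`-sequence consisting of `b 0 - b σ` entries `+1`,
then, for each `i = 1, ..., σ`, an entry `-1` followed by `b i - b (i-1) + 1` entries `+1`. -/
def bridgeToSeq (σ : ℕ) (b : List ℤ) : List ℤ :=
  List.replicate (b.getD 0 0 - b.getD σ 0).toNat 1 ++
    (List.range σ).flatMap fun i =>
      (-1 : ℤ) :: List.replicate (b.getD (i + 1) 0 - b.getD i 0 + 1).toNat 1

/-- Turn a list of run lengths `[k₀,…,kσ]` into the `±1` sequence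
`1^k₀ (-1) 1^k₁ (-1) … (-1) 1^kσ`. -/
def fromRuns : List ℕ → List ℤ
  | [] => []
  | k :: ks => List.replicate k 1 ++ ks.flatMap fun m => (-1 : ℤ) :: List.replicate m 1

/-- Read off the run lengths of (maximal blocks of non-`-1` entries of) a list. -/
def toRuns : List ℤ → List ℕ
  | [] => [0]
  | x :: xs =>
    if x = -1 then 0 :: toRuns xs
    else ((toRuns xs).headI + 1) :: (toRuns xs).tail

theorem toRuns_ne_nil (l : List ℤ) : toRuns l ≠ [] := by
  cases l with
  | nil => simp [toRuns]
  | cons x xs => by_cases h : x = -1 <;> simp [toRuns, h]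

theorem toRuns_eq_cons (l : List ℤ) :
    toRuns l = (toRuns l).headI :: (toRuns l).tail := by
  cases h : toRuns l with
  | nil => exact absurd h (toRuns_ne_nil l)
  | cons a t => simp

theorem toRuns_neg_cons (l : List ℤ) : toRuns (-1 :: l) = 0 :: toRuns l := by
  simp [toRuns]

theorem toRuns_replicate_append (k : ℕ) (l : List ℤ) :
    toRuns (List.replicate k 1 ++ l) = ((toRuns l).headI + k) :: (toRuns l).tail := by
  induction k with
  | zero => simpa using toRuns_eq_cons l
  | succ n ih =>
      rw [List.replicate_succ, List.cons_append]
      show toRuns (1 :: (List.replicate n 1 ++ l)) = _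
      rw [toRuns, if_neg (by norm_num), ih]
      simp; ring

theorem toRuns_fromRuns : ∀ ks : List ℕ, ks ≠ [] → toRuns (fromRuns ks) = ks := by
  intro ks hks
  induction ks with
  | nil => exact absurd rfl hks
  | cons k ks ih =>
      cases ks with
      | nil =>
          show toRuns (List.replicate k 1 ++ []) = _
          rw [toRuns_replicate_append]
          simp [toRuns]
      | cons k' ks' =>
          have h : fromRuns (k :: k' :: ks') =
              List.replicate k 1 ++ (-1 :: fromRuns (k' :: ks')) := by
            simp [fromRuns]
          rw [h, toRuns_replicate_append, toRuns_neg_cons]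
          simp [ih (by simp)]

theorem fromRuns_toRuns (l : List ℤ) (hl : ∀ x ∈ l, x = 1 ∨ x = -1) :
    fromRuns (toRuns l) = l := by
  induction l with
  | nil => simp [toRuns, fromRuns]
  | cons x xs ih =>
      have hx := hl x (by simp)
      have hxs : ∀ y ∈ xs, y = 1 ∨ y = -1 := fun y hy => hl y (by simp [hy])
      rcases hx with hx | hx
      · subst hx
        rw [toRuns, if_neg (by norm_num)]
        cases h : toRuns xs with
        | nil => exact absurd h (toRuns_ne_nil xs)
        | cons a t =>
            rw [h] at ih
            simp only [List.headI, List.tail]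
            rw [fromRuns, List.replicate_succ, List.cons_append]
            rw [fromRuns] at ih
            rw [ih hxs]
      · subst hx
        rw [toRuns_neg_cons]
        cases h : toRuns xs with
        | nil => exact absurd h (toRuns_ne_nil xs)
        | cons a t =>
            rw [h] at ih
            rw [fromRuns]
            simp only [List.replicate_zero, List.nil_append, List.flatMap_cons,
              List.cons_append, List.nil_append]
            rw [fromRuns] at ih
            rw [ih hxs]

theorem toRuns_length (l : List ℤ) : (toRuns l).length = l.count (-1) + 1 := by
  induction l with
  | nil => simp [toRuns]
  | cons x xs ih =>
      by_cases h : x = -1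
      · subst h; simp [toRuns_neg_cons, ih, List.count_cons]
      · rw [toRuns, if_neg h]
        rw [toRuns_eq_cons xs] at ih
        simp only [List.length_cons] at ih ⊢
        simp [List.count_cons, h, ← ih]

theorem toRuns_sum (l : List ℤ) : (toRuns l).sum + l.count (-1) = l.length := by
  induction l with
  | nil => simp [toRuns]
  | cons x xs ih =>
      by_cases h : x = -1
      · subst h; simp only [toRuns_neg_cons, List.sum_cons, List.count_cons]
        simp; omega
      · rw [toRuns, if_neg h]
        rw [toRuns_eq_cons xs] at ih
        simp only [List.sum_cons, List.count_cons, List.length_cons] at ih ⊢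
        simp [h]; omega

theorem fromRuns_mem (ks : List ℕ) (x : ℤ) (hx : x ∈ fromRuns ks) : x = 1 ∨ x = -1 := by
  cases ks with
  | nil => simp [fromRuns] at hx
  | cons k ks =>
      simp only [fromRuns, List.mem_append, List.mem_replicate, List.mem_flatMap,
        List.mem_cons] at hx
      rcases hx with ⟨-, h⟩ | ⟨m, -, h | ⟨-, h⟩⟩
      · exact Or.inl h
      · exact Or.inr h
      · exact Or.inl h

/-- The list of run lengths associated to a bridge. -/
def runsOfBridge (σ : ℕ) (b : List ℤ) : List ℕ :=
  (b.getD 0 0 - b.getD σ 0).toNat ::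
    (List.range σ).map fun i => (b.getD (i + 1) 0 - b.getD i 0 + 1).toNat

/-- The bridge associated to a list of run lengths. -/
def bridgeOfRuns (σ : ℕ) (ks : List ℕ) : List ℤ :=
  (List.range (σ + 1)).map fun i => ((ks.tail.take i).sum : ℤ) - i

theorem sum_map_range {M : Type*} [AddCommMonoid M] (g : ℕ → M) (n : ℕ) :
    ((List.range n).map g).sum = ∑ j ∈ Finset.range n, g j := by
  induction n with
  | zero => simp
  | succ n ih => rw [List.range_succ, Finset.sum_range_succ, ← ih]; simp

theorem getD_map_range (f : ℕ → ℤ) {n i : ℕ} (h : i < n) :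
    ((List.range n).map f).getD i 0 = f i := by
  have hlen : i < ((List.range n).map f).length := by simpa using h
  rw [List.getD_eq_getElem _ _ hlen]
  simp

theorem bridge_partial {σ : ℕ} {b : List ℤ} (hb : IsBridge σ b) {i : ℕ} (hi : i ≤ σ) :
    (∑ j ∈ Finset.range i, ((b.getD (j + 1) 0 - b.getD j 0 + 1).toNat : ℤ))
      = b.getD i 0 + i := by
  have h1 : ∀ j ∈ Finset.range i,
      ((b.getD (j + 1) 0 - b.getD j 0 + 1).toNat : ℤ)
        = (b.getD (j + 1) 0 + ((j + 1 : ℕ) : ℤ)) - (b.getD j 0 + (j : ℤ)) := by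
    intro j hj
    rw [Finset.mem_range] at hj
    have := hb.2.2.1 j (lt_of_lt_of_le hj hi)
    rw [Int.toNat_of_nonneg (by omega)]
    push_cast; ring
  rw [Finset.sum_congr rfl h1, Finset.sum_range_sub (fun j => b.getD j 0 + j)]
  rw [hb.2.1]; push_cast; ring

theorem bridgeOfRuns_getD (σ : ℕ) (ks : List ℕ) {i : ℕ} (hi : i ≤ σ) :
    (bridgeOfRuns σ ks).getD i 0 = ((ks.tail.take i).sum : ℤ) - i :=
  getD_map_range _ (by omega)

theorem runs_take_sum {σ : ℕ} {b : List ℤ} (hb : IsBridge σ b) {i : ℕ} (hi : i ≤ σ) :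
    (((runsOfBridge σ b).tail.take i).sum : ℤ) = b.getD i 0 + i := by
  show ((((List.range σ).map fun j =>
      (b.getD (j + 1) 0 - b.getD j 0 + 1).toNat).take i).sum : ℤ) = _
  rw [← List.map_take, List.take_range, min_eq_left hi, sum_map_range, Nat.cast_sum]
  exact bridge_partial hb hi

theorem runsOfBridge_sum {σ : ℕ} {b : List ℤ} (hb : IsBridge σ b) :
    (runsOfBridge σ b).sum = σ := by
  have h0 := hb.2.1
  have hσ := hb.2.2.2
  have key : ((runsOfBridge σ b).sum : ℤ) = σ := by
    rw [runsOfBridge, List.sum_cons, Nat.cast_add, sum_map_range, Nat.cast_sum,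
      bridge_partial hb le_rfl, h0, Int.toNat_of_nonneg (by omega)]
    ring
  exact_mod_cast key

theorem bridgeOfRuns_runsOfBridge {σ : ℕ} {b : List ℤ} (hb : IsBridge σ b) :
    bridgeOfRuns σ (runsOfBridge σ b) = b := by
  have hlen : (bridgeOfRuns σ (runsOfBridge σ b)).length = σ + 1 := by simp [bridgeOfRuns]
  apply List.ext_getElem (by rw [hlen, hb.1])
  intro i h1 h2
  have hi : i ≤ σ := by rw [hlen] at h1; omega
  have e1 := bridgeOfRuns_getD σ (runsOfBridge σ b) hi
  rw [runs_take_sum hb hi, List.getD_eq_getElem _ _ h1, List.getD_eq_getElem _ _ h2] at e1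
  omega

theorem bridgeOfRuns_isBridge {σ : ℕ} {ks : List ℕ} (hlen : ks.length = σ + 1)
    (hsum : ks.sum = σ) : IsBridge σ (bridgeOfRuns σ ks) := by
  have hne : ks ≠ [] := by intro h; rw [h] at hlen; simp at hlen
  have htl : ks.tail.length = σ := by rw [List.length_tail, hlen]; omega
  have hdecomp : ks.head hne :: ks.tail = ks := List.cons_head_tail hne
  have hsum' : ks.head hne + ks.tail.sum = σ := by
    rw [← hsum]; conv_rhs => rw [← hdecomp]
    rw [List.sum_cons]
  refine ⟨by simp [bridgeOfRuns], ?_, ?_, ?_⟩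
  · rw [bridgeOfRuns_getD σ ks (Nat.zero_le σ)]; simp
  · intro i hi
    rw [bridgeOfRuns_getD σ ks hi.le, bridgeOfRuns_getD σ ks (by omega : i + 1 ≤ σ)]
    rw [List.sum_take_succ _ i (by omega)]
    push_cast
    have : (0 : ℤ) ≤ (ks.tail[i]'(by omega) : ℤ) := by positivity
    linarith
  · rw [bridgeOfRuns_getD σ ks le_rfl, List.take_of_length_le (le_of_eq htl)]
    omega

theorem runsOfBridge_bridgeOfRuns {σ : ℕ} {ks : List ℕ} (hlen : ks.length = σ + 1)
    (hsum : ks.sum = σ) : runsOfBridge σ (bridgeOfRuns σ ks) = ks := by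
  have hne : ks ≠ [] := by intro h; rw [h] at hlen; simp at hlen
  have htl : ks.tail.length = σ := by rw [List.length_tail, hlen]; omega
  have hdecomp : ks.head hne :: ks.tail = ks := List.cons_head_tail hne
  have hsum' : ks.head hne + ks.tail.sum = σ := by
    rw [← hsum]; conv_rhs => rw [← hdecomp]
    rw [List.sum_cons]
  rw [runsOfBridge]
  rw [bridgeOfRuns_getD σ ks (Nat.zero_le σ), bridgeOfRuns_getD σ ks le_rfl,
    List.take_of_length_le (le_of_eq htl)]
  simp only [List.take_zero, List.sum_nil, Nat.cast_zero]
  conv_rhs => rw [← hdecomp]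
  congr 1
  · omega
  · apply List.ext_getElem (by simp [htl])
    intro i h1 h2
    simp only [List.getElem_map, List.getElem_range]
    rw [bridgeOfRuns_getD σ ks (by simp at h1; omega : i + 1 ≤ σ),
      bridgeOfRuns_getD σ ks (by simp at h1; omega : i ≤ σ),
      List.sum_take_succ _ i (by simp at h1; omega)]
    push_cast
    omega

theorem bridgeToSeq_eq (σ : ℕ) (b : List ℤ) :
    bridgeToSeq σ b = fromRuns (runsOfBridge σ b) := by
  rw [bridgeToSeq, runsOfBridge, fromRuns, List.flatMap_map]

theorem runsOfBridge_bijOn (σ : ℕ) :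
    Set.BijOn (runsOfBridge σ) {b : List ℤ | IsBridge σ b}
      {ks : List ℕ | ks.length = σ + 1 ∧ ks.sum = σ} := by
  apply Set.InvOn.bijOn (f' := bridgeOfRuns σ)
  · exact ⟨fun b hb => bridgeOfRuns_runsOfBridge hb,
      fun ks hks => runsOfBridge_bridgeOfRuns hks.1 hks.2⟩
  · exact fun b hb => ⟨by simp [runsOfBridge], runsOfBridge_sum hb⟩
  · exact fun ks hks => bridgeOfRuns_isBridge hks.1 hks.2

theorem fromRuns_bijOn (σ : ℕ) :
    Set.BijOn fromRuns {ks : List ℕ | ks.length = σ + 1 ∧ ks.sum = σ}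
      {l : List ℤ | l.length = 2 * σ ∧ (∀ x ∈ l, x = 1 ∨ x = -1) ∧ l.count (-1) = σ} := by
  apply Set.InvOn.bijOn (f' := toRuns)
  · constructor
    · intro ks hks
      exact toRuns_fromRuns ks (by intro h; rw [h] at hks; simp at hks)
    · intro l hl
      exact fromRuns_toRuns l hl.2.1
  · intro ks hks
    obtain ⟨h1, h2⟩ := hks
    have hne : ks ≠ [] := by intro h; rw [h] at h1; simp at h1
    have htr : toRuns (fromRuns ks) = ks := toRuns_fromRuns ks hne
    have hcount : (fromRuns ks).count (-1) = σ := by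
      have := toRuns_length (fromRuns ks)
      rw [htr, h1] at this; omega
    have hlength : (fromRuns ks).length = 2 * σ := by
      have := toRuns_sum (fromRuns ks)
      rw [htr, h2, hcount] at this; omega
    exact ⟨hlength, fromRuns_mem ks, hcount⟩
  · intro l hl
    obtain ⟨h1, h2, h3⟩ := hl
    refine ⟨by rw [toRuns_length, h3], ?_⟩
    have := toRuns_sum l
    rw [h1, h3] at this; omega

/-- `bridgeToSeq` is a bijection from the set of bridges of length `σ` onto the set of
sequences in `{-1,+1}^{2σ}` containing exactly `σ` entries equal to `-1`. -/
theorem bridgeToSeq_bijOn (σ : ℕ) (hσ : 0 < σ) :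
    Set.BijOn (bridgeToSeq σ) {b : List ℤ | IsBridge σ b}
      {l : List ℤ | l.length = 2 * σ ∧ (∀ x ∈ l, x = 1 ∨ x = -1) ∧ l.count (-1) = σ} := by
  exact ((fromRuns_bijOn σ).comp (runsOfBridge_bijOn σ)).congr
    fun b _ => (bridgeToSeq_eq σ b).symm
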